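/- Let d ≥ 1 and let u, v, w : ℝ × ℝ → ℝ^d be smooth (C^∞) functions, all 1-periodic in x, satisfying at every point the mixed system: u_t + v_x + w = 0, v = (1/2)‖u‖² u + u_xx, and w = ‖u‖² u_x − (u_x·u) u. Then the energy functional F₄(u)(t) = ∫₀¹ (1/2)‖u_x(x,t)‖² − (1/8)‖u(x,t)‖⁴ dx is constant in t; equivalently, its time derivative vanishes for every t. -/

import Mathlib

open Real MeasureTheory intervalIntegral InnerProductSpace ContDiff

/-- Partial derivative in the first (space) variable. -/
noncomputable def pdx {E : Type*} [NormedAddCommGroup E] [NormedSpace ℝ E]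
    (u : ℝ → ℝ → E) : ℝ → ℝ → E := fun x t => deriv (fun y => u y t) x

/-- Partial derivative in the second (time) variable. -/
noncomputable def pdt {E : Type*} [NormedAddCommGroup E] [NormedSpace ℝ E]
    (u : ℝ → ℝ → E) : ℝ → ℝ → E := fun x t => deriv (fun s => u x s) t

/-- The vectorial modified KdV equation `u_t + (3/2)‖u‖² u_x + u_xxx = 0`. -/
def IsVmKdV {d : ℕ} (u : ℝ → ℝ → EuclideanSpace ℝ (Fin d)) : Prop :=
  ∀ x t : ℝ,
    pdt u x t + ((3 : ℝ) / 2 * ‖u x t‖ ^ 2) • pdx u x t + pdx (pdx (pdx u)) x t = 0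

section aux
variable {E : Type*} [NormedAddCommGroup E] [NormedSpace ℝ E]
variable {g : ℝ → ℝ → E}

lemma hasDerivAt_slice_x' (hg : ContDiff ℝ ∞ (Function.uncurry g)) (x t : ℝ) :
    HasDerivAt (fun y => g y t) (fderiv ℝ (Function.uncurry g) (x, t) (1, 0)) x := by
  have h1 : HasDerivAt (fun y : ℝ => (y, t)) ((1:ℝ), (0:ℝ)) x :=
    (hasDerivAt_id x).prodMk (hasDerivAt_const x t)
  have h2 : HasFDerivAt (Function.uncurry g) (fderiv ℝ (Function.uncurry g) (x, t)) (x, t) :=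
    ((hg.differentiable (by simp)) (x, t)).hasFDerivAt
  exact h2.comp_hasDerivAt x h1

lemma pdx_eq (hg : ContDiff ℝ ∞ (Function.uncurry g)) (x t : ℝ) :
    pdx g x t = fderiv ℝ (Function.uncurry g) (x, t) (1, 0) :=
  (hasDerivAt_slice_x' hg x t).deriv

lemma hasDerivAt_slice_x (hg : ContDiff ℝ ∞ (Function.uncurry g)) (x t : ℝ) :
    HasDerivAt (fun y => g y t) (pdx g x t) x := by
  rw [pdx_eq hg]; exact hasDerivAt_slice_x' hg x t

lemma hasDerivAt_slice_t' (hg : ContDiff ℝ ∞ (Function.uncurry g)) (x t : ℝ) :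
    HasDerivAt (fun s => g x s) (fderiv ℝ (Function.uncurry g) (x, t) (0, 1)) t := by
  have h1 : HasDerivAt (fun s : ℝ => (x, s)) ((0:ℝ), (1:ℝ)) t :=
    (hasDerivAt_const t x).prodMk (hasDerivAt_id t)
  have h2 : HasFDerivAt (Function.uncurry g) (fderiv ℝ (Function.uncurry g) (x, t)) (x, t) :=
    ((hg.differentiable (by simp)) (x, t)).hasFDerivAt
  exact h2.comp_hasDerivAt t h1

lemma pdt_eq (hg : ContDiff ℝ ∞ (Function.uncurry g)) (x t : ℝ) :
    pdt g x t = fderiv ℝ (Function.uncurry g) (x, t) (0, 1) :=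
  (hasDerivAt_slice_t' hg x t).deriv

lemma hasDerivAt_slice_t (hg : ContDiff ℝ ∞ (Function.uncurry g)) (x t : ℝ) :
    HasDerivAt (fun s => g x s) (pdt g x t) t := by
  rw [pdt_eq hg]; exact hasDerivAt_slice_t' hg x t

lemma contDiff_pdx (hg : ContDiff ℝ ∞ (Function.uncurry g)) :
    ContDiff ℝ ∞ (Function.uncurry (pdx g)) := by
  have : Function.uncurry (pdx g)
      = fun p : ℝ × ℝ => fderiv ℝ (Function.uncurry g) p ((1:ℝ), (0:ℝ)) := by
    funext p
    exact pdx_eq hg p.1 p.2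
  rw [this]
  exact (hg.fderiv_right (by exact_mod_cast le_top)).clm_apply contDiff_const

lemma contDiff_pdt (hg : ContDiff ℝ ∞ (Function.uncurry g)) :
    ContDiff ℝ ∞ (Function.uncurry (pdt g)) := by
  have : Function.uncurry (pdt g)
      = fun p : ℝ × ℝ => fderiv ℝ (Function.uncurry g) p ((0:ℝ), (1:ℝ)) := by
    funext p
    exact pdt_eq hg p.1 p.2
  rw [this]
  exact (hg.fderiv_right (by exact_mod_cast le_top)).clm_apply contDiff_const

lemma clairaut (hg : ContDiff ℝ ∞ (Function.uncurry g)) (x t : ℝ) :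
    pdx (pdt g) x t = pdt (pdx g) x t := by
  have hsymm : IsSymmSndFDerivAt ℝ (Function.uncurry g) (x, t) :=
    hg.contDiffAt.isSymmSndFDerivAt (by simp [minSmoothness_of_isRCLikeNormedField]; exact ENat.LEInfty.out)
  rw [pdx_eq (contDiff_pdt hg), pdt_eq (contDiff_pdx hg)]
  have hder : Differentiable ℝ (fderiv ℝ (Function.uncurry g)) :=
    (hg.fderiv_right (m := ∞) (by exact_mod_cast le_top)).differentiable
      (by simp)
  have e1 : (fun p : ℝ × ℝ => fderiv ℝ (Function.uncurry g) p ((0:ℝ),(1:ℝ)))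
      = Function.uncurry (pdt g) := by
    funext p; exact (pdt_eq hg p.1 p.2).symm
  have e2 : (fun p : ℝ × ℝ => fderiv ℝ (Function.uncurry g) p ((1:ℝ),(0:ℝ)))
      = Function.uncurry (pdx g) := by
    funext p; exact (pdx_eq hg p.1 p.2).symm
  rw [← e1, ← e2]
  rw [fderiv_clm_apply (hder _) (differentiableAt_const _),
      fderiv_clm_apply (hder _) (differentiableAt_const _)]
  simp only [fderiv_fun_const, fderiv_const, Pi.zero_apply, ContinuousLinearMap.comp_zero,
    ContinuousLinearMap.zero_apply, add_zero, zero_add, ContinuousLinearMap.flip_apply,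
    ContinuousLinearMap.comp_apply]
  exact hsymm _ _

end aux

section aux2
variable {E : Type*} [NormedAddCommGroup E] [NormedSpace ℝ E]
variable {g : ℝ → ℝ → E}

lemma pdx_per (hper : ∀ x t : ℝ, g (x + 1) t = g x t) (x t : ℝ) :
    pdx g (x + 1) t = pdx g x t := by
  show deriv (fun y => g y t) (x + 1) = deriv (fun y => g y t) x
  rw [← deriv_comp_add_const (fun y => g y t) 1]
  simp only [hper]

lemma pdt_per (hper : ∀ x t : ℝ, g (x + 1) t = g x t) (x t : ℝ) :
    pdt g (x + 1) t = pdt g x t := by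
  simp only [pdt, hper]

lemma cont_slice (hg : ContDiff ℝ ∞ (Function.uncurry g)) (t : ℝ) :
    Continuous fun x => g x t :=
  hg.continuous.comp (continuous_id.prodMk continuous_const)

end aux2


lemma key_algebra {d : ℕ} (a b c p q V Vx W : EuclideanSpace ℝ (Fin d))
    (hp : p + Vx + W = 0)
    (hV : V = ((1:ℝ)/2 * ‖a‖^2) • a + c)
    (hW : W = ‖a‖^2 • b - ⟪b, a⟫_ℝ • a) :
    ⟪q, b⟫_ℝ - 1/2 * ⟪a, a⟫_ℝ * ⟪p, a⟫_ℝ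
      = ((⟪b, q⟫_ℝ + ⟪c, p⟫_ℝ) + 1/2 * (⟪V, Vx⟫_ℝ + ⟪Vx, V⟫_ℝ)
          + 1/2 * ((⟪a, b⟫_ℝ + ⟪b, a⟫_ℝ) * ⟪b, b⟫_ℝ + ⟪a, a⟫_ℝ * (⟪b, c⟫_ℝ + ⟪c, b⟫_ℝ)))
        - 1/2 * (((2:ℕ):ℝ) * ⟪a, b⟫_ℝ ^ (2-1) * (⟪a, c⟫_ℝ + ⟪b, b⟫_ℝ)) := by
  have hp' : p = -(Vx + W) := by
    rw [add_assoc] at hp; exact eq_neg_of_add_eq_zero_left hp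
  subst hp' hV hW
  simp only [inner_add_left, inner_add_right, inner_sub_left, inner_sub_right,
    inner_neg_left, inner_neg_right, real_inner_smul_left, real_inner_smul_right,
    real_inner_self_eq_norm_sq]
  rw [real_inner_comm b a, real_inner_comm c a, real_inner_comm c b,
    real_inner_comm q b, real_inner_comm Vx a, real_inner_comm c Vx]
  ring

theorem vmkdv_mixed_system_conservative (d : ℕ) (hd : 1 ≤ d)
    (u v w : ℝ → ℝ → EuclideanSpace ℝ (Fin d))
    (hu : ContDiff ℝ ∞ (Function.uncurry u))
    (hv : ContDiff ℝ ∞ (Function.uncurry v))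
    (hw : ContDiff ℝ ∞ (Function.uncurry w))
    (huper : ∀ x t : ℝ, u (x + 1) t = u x t)
    (hvper : ∀ x t : ℝ, v (x + 1) t = v x t)
    (hwper : ∀ x t : ℝ, w (x + 1) t = w x t)
    (h1 : ∀ x t : ℝ, pdt u x t + pdx v x t + w x t = 0)
    (h2 : ∀ x t : ℝ, v x t = ((1 : ℝ) / 2 * ‖u x t‖ ^ 2) • u x t + pdx (pdx u) x t)
    (h3 : ∀ x t : ℝ,
      w x t = ‖u x t‖ ^ 2 • pdx u x t - ⟪pdx u x t, u x t⟫_ℝ • u x t) :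
    (∀ s t : ℝ,
        (∫ x in (0:ℝ)..1, (1 : ℝ) / 2 * ‖pdx u x s‖ ^ 2 - (1 : ℝ) / 8 * ‖u x s‖ ^ 4)
          = ∫ x in (0:ℝ)..1, (1 : ℝ) / 2 * ‖pdx u x t‖ ^ 2 - (1 : ℝ) / 8 * ‖u x t‖ ^ 4)
      ∧ ∀ t : ℝ,
        deriv (fun s =>
          ∫ x in (0:ℝ)..1, (1 : ℝ) / 2 * ‖pdx u x s‖ ^ 2 - (1 : ℝ) / 8 * ‖u x s‖ ^ 4) t = 0 := by
  have hux : ContDiff ℝ ∞ (Function.uncurry (pdx u)) := contDiff_pdx hu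
  have huxx : ContDiff ℝ ∞ (Function.uncurry (pdx (pdx u))) := contDiff_pdx hux
  have hut : ContDiff ℝ ∞ (Function.uncurry (pdt u)) := contDiff_pdt hu
  have huxt : ContDiff ℝ ∞ (Function.uncurry (pdt (pdx u))) := contDiff_pdt hux
  have hvx : ContDiff ℝ ∞ (Function.uncurry (pdx v)) := contDiff_pdx hv
  set ft : ℝ → ℝ → ℝ := fun x s =>
    ⟪pdt (pdx u) x s, pdx u x s⟫_ℝ
      - 1/2 * ⟪u x s, u x s⟫_ℝ * ⟪pdt u x s, u x s⟫_ℝ with hft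
  -- Step A : time derivative of the integrand
  have stepA : ∀ x s : ℝ, HasDerivAt
      (fun s' => (1:ℝ)/2 * ‖pdx u x s'‖^2 - (1:ℝ)/8 * ‖u x s'‖^4) (ft x s) s := by
    intro x s
    have e1 : (fun s' => (1:ℝ)/2 * ‖pdx u x s'‖^2 - (1:ℝ)/8 * ‖u x s'‖^4)
        = fun s' => (1:ℝ)/2 * ⟪pdx u x s', pdx u x s'⟫_ℝ
            - (1:ℝ)/8 * ⟪u x s', u x s'⟫_ℝ^2 := by
      funext s'
      rw [real_inner_self_eq_norm_sq, real_inner_self_eq_norm_sq]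
      ring
    rw [e1]
    have d1 := HasDerivAt.inner ℝ (hasDerivAt_slice_t hux x s) (hasDerivAt_slice_t hux x s)
    have d2 := HasDerivAt.inner ℝ (hasDerivAt_slice_t hu x s) (hasDerivAt_slice_t hu x s)
    have h := (d1.const_mul ((1:ℝ)/2)).sub ((d2.pow 2).const_mul ((1:ℝ)/8))
    refine h.congr_deriv (Eq.symm ?_)
    simp only [hft]
    linear_combination (1/2 : ℝ) * real_inner_comm (pdx u x s) (pdt (pdx u) x s)
      - 1/4 * ⟪u x s, u x s⟫_ℝ * real_inner_comm (u x s) (pdt u x s)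
  -- Step B : the flux function G and its space derivative
  have stepB : ∀ t x : ℝ, HasDerivAt (fun y =>
      ((⟪pdx u y t, pdt u y t⟫_ℝ + 1/2 * ⟪v y t, v y t⟫_ℝ)
        + 1/2 * (⟪u y t, u y t⟫_ℝ * ⟪pdx u y t, pdx u y t⟫_ℝ))
        - 1/2 * ⟪u y t, pdx u y t⟫_ℝ^2) (ft x t) x := by
    intro t x
    have d1 := HasDerivAt.inner ℝ (hasDerivAt_slice_x hux x t) (hasDerivAt_slice_x hut x t)
    have d2 := HasDerivAt.inner ℝ (hasDerivAt_slice_x hv x t) (hasDerivAt_slice_x hv x t)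
    have d3 := HasDerivAt.inner ℝ (hasDerivAt_slice_x hu x t) (hasDerivAt_slice_x hu x t)
    have d4 := HasDerivAt.inner ℝ (hasDerivAt_slice_x hux x t) (hasDerivAt_slice_x hux x t)
    have d5 := HasDerivAt.inner ℝ (hasDerivAt_slice_x hu x t) (hasDerivAt_slice_x hux x t)
    have h := ((d1.add (d2.const_mul ((1:ℝ)/2))).add
        ((d3.mul d4).const_mul ((1:ℝ)/2))).sub ((d5.pow 2).const_mul ((1:ℝ)/2))
    refine h.congr_deriv (Eq.symm ?_)
    simp only [hft]
    rw [clairaut hu x t]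
    exact key_algebra (u x t) (pdx u x t) (pdx (pdx u) x t) (pdt u x t)
      (pdt (pdx u) x t) (v x t) (pdx v x t) (w x t) (h1 x t) (h2 x t) (h3 x t)
  -- Step D : the space integral of ft vanishes
  have stepD : ∀ t : ℝ, (∫ x in (0:ℝ)..1, ft x t) = 0 := by
    intro t
    have hcont : Continuous fun x => ft x t := by
      rw [hft]
      exact ((cont_slice huxt t).inner (cont_slice hux t)).sub
        ((continuous_const.mul ((cont_slice hu t).inner (cont_slice hu t))).mul
          ((cont_slice hut t).inner (cont_slice hu t)))
    have hint : IntervalIntegrable (fun x => ft x t) MeasureTheory.volume 0 1 :=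
      hcont.intervalIntegrable 0 1
    rw [intervalIntegral.integral_eq_sub_of_hasDerivAt (fun x _ => stepB t x) hint]
    have eU : u 1 t = u 0 t := by simpa using huper 0 t
    have eUx : pdx u 1 t = pdx u 0 t := by simpa using pdx_per huper 0 t
    have eUt : pdt u 1 t = pdt u 0 t := by simpa using pdt_per huper 0 t
    have eV : v 1 t = v 0 t := by simpa using hvper 0 t
    rw [eU, eUx, eUt, eV]
    ring
  -- Step E : differentiation under the integral sign
  have stepE : ∀ t₀ : ℝ, HasDerivAt (fun s =>
      ∫ x in (0:ℝ)..1, (1:ℝ)/2 * ‖pdx u x s‖^2 - (1:ℝ)/8 * ‖u x s‖^4) 0 t₀ := by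
    intro t₀
    have hcf : Continuous fun p : ℝ × ℝ =>
        (1:ℝ)/2 * ‖pdx u p.1 p.2‖^2 - (1:ℝ)/8 * ‖u p.1 p.2‖^4 := by
      have c1 : Continuous fun p : ℝ × ℝ => pdx u p.1 p.2 := hux.continuous
      have c2 : Continuous fun p : ℝ × ℝ => u p.1 p.2 := hu.continuous
      exact (continuous_const.mul ((c1.norm).pow 2)).sub
        (continuous_const.mul ((c2.norm).pow 4))
    have hcft : Continuous fun p : ℝ × ℝ => ft p.1 p.2 := by
      rw [hft]
      have c1 : Continuous fun p : ℝ × ℝ => pdx u p.1 p.2 := hux.continuous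
      have c2 : Continuous fun p : ℝ × ℝ => u p.1 p.2 := hu.continuous
      have c3 : Continuous fun p : ℝ × ℝ => pdt u p.1 p.2 := hut.continuous
      have c4 : Continuous fun p : ℝ × ℝ => pdt (pdx u) p.1 p.2 := huxt.continuous
      exact (c4.inner c1).sub
        ((continuous_const.mul (c2.inner c2)).mul (c3.inner c2))
    obtain ⟨C, hC⟩ := (isCompact_Icc.prod isCompact_Icc :
        IsCompact ((Set.Icc (0:ℝ) 1) ×ˢ (Set.Icc (t₀ - 1) (t₀ + 1)))).exists_bound_of_continuousOn
        hcft.continuousOn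
    have key := intervalIntegral.hasDerivAt_integral_of_dominated_loc_of_deriv_le
      (F := fun s x => (1:ℝ)/2 * ‖pdx u x s‖^2 - (1:ℝ)/8 * ‖u x s‖^4)
      (F' := fun s x => ft x s) (bound := fun _ => C) (a := 0) (b := 1)
      (μ := MeasureTheory.volume) (x₀ := t₀) (Metric.ball_mem_nhds t₀ one_pos)
      (Filter.Eventually.of_forall fun s =>
        ((hcf.comp (continuous_id.prodMk continuous_const : Continuous fun x : ℝ => (x, s)))).aestronglyMeasurable)
      ((hcf.comp (continuous_id.prodMk continuous_const)).intervalIntegrable 0 1)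
      ((hcft.comp (continuous_id.prodMk continuous_const)).aestronglyMeasurable)
      (Filter.Eventually.of_forall fun x hx s hs => by
        have hx' : x ∈ Set.Icc (0:ℝ) 1 := by
          rw [Set.uIoc_of_le (by norm_num : (0:ℝ) ≤ 1)] at hx
          exact ⟨le_of_lt hx.1, hx.2⟩
        have hs' : s ∈ Set.Icc (t₀ - 1) (t₀ + 1) := by
          rw [Metric.mem_ball, Real.dist_eq, abs_sub_lt_iff] at hs
          constructor <;> linarith [hs.1, hs.2]
        exact hC (x, s) ⟨hx', hs'⟩)
      (intervalIntegrable_const)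
      (Filter.Eventually.of_forall fun x _ s _ => stepA x s)
    have h2' := key.2
    rwa [stepD t₀] at h2'
  refine ⟨fun s t => ?_, fun t => (stepE t).deriv⟩
  exact is_const_of_deriv_eq_zero (fun t' => (stepE t').differentiableAt)
    (fun t' => (stepE t').deriv) s t
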